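/- Merkle path collision extraction (Ext₂): for any function H : {0,1}* → {0,1}^λ, if two distinct sibling paths path ≠ path' of length k for the same message m and the same leaf index j satisfy RootReconstruct^H(path, m, j) = RootReconstruct^H(path', m, j), then there exist x ≠ x' with H(x) = H(x'), i.e., a collision of H. -/

import Mathlib

/-- Root of the complete binary Merkle hash tree over the `2^k` messages
`M 0, …, M (2^k − 1)`: leaf `i` carries `H (M i)` and each internal node carries
the hash of the concatenation of its two children's values. -/
def merkleRoot (H : List Bool → List Bool) : ℕ → (ℕ → List Bool) → List Bool
  | 0, M => H (M 0)
  | k + 1, M => H (merkleRoot H k M ++ merkleRoot H k (fun j => M (2 ^ k + j)))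

/-- Authentication path for leaf index `i`: the list of sibling hash values along the
root-to-leaf path, from the top level down to the leaf level. -/
def merklePath (H : List Bool → List Bool) : ℕ → (ℕ → List Bool) → ℕ → List (List Bool)
  | 0, _, _ => []
  | k + 1, M, i =>
    if i < 2 ^ k then
      merkleRoot H k (fun j => M (2 ^ k + j)) :: merklePath H k M i
    else
      merkleRoot H k M :: merklePath H k (fun j => M (2 ^ k + j)) (i - 2 ^ k)

/-- `bitsOf k i` is the `k`-bit big-endian binary expansion `(b₁,…,b_k)` of `i`. -/
def bitsOf : ℕ → ℕ → List Bool
  | 0, _ => []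
  | k + 1, i => decide (2 ^ k ≤ i) :: bitsOf k (i % 2 ^ k)

/-- `rootReconstruct H bits path v` recomputes the root value from a claimed leaf
value `v`, the root-to-leaf direction bits, and the sibling path, by iterated
hashing: at each level the current value is concatenated with the sibling on the
side indicated by the direction bit. -/
def rootReconstruct (H : List Bool → List Bool) :
    List Bool → List (List Bool) → List Bool → List Bool
  | [], _, v => v
  | _ :: _, [], v => v
  | b :: bs, s :: ss, v =>
    let child := rootReconstruct H bs ss v
    H (if b then s ++ child else child ++ s)

lemma rootReconstruct_len (lam : ℕ) (H : List Bool → List Bool)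
    (hH : ∀ x, (H x).length = lam) (m : List Bool) :
    ∀ bs ss, (rootReconstruct H bs ss (H m)).length = lam := by
  intro bs ss
  cases bs with
  | nil => simp [rootReconstruct, hH]
  | cons b bs =>
    cases ss with
    | nil => simp [rootReconstruct, hH]
    | cons s ss => simp [rootReconstruct, hH]

/-- Merkle path collision extraction (Ext₂): for any `H : {0,1}* → {0,1}^λ`
(all outputs of length `λ`), if two distinct sibling paths `path ≠ path'` of
length `k` (with `λ`-bit entries) for the same message `m` and the same leaf
index `j` reconstruct to the same root value, then there exist `x ≠ x'` with
`H x = H x'`, i.e. a collision of `H`. -/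
theorem stmt_6 (lam : ℕ) (H : List Bool → List Bool)
    (hH : ∀ x, (H x).length = lam)
    (k : ℕ) (j : ℕ) (hj : j < 2 ^ k) (m : List Bool)
    (path path' : List (List Bool))
    (hne : path ≠ path')
    (hlen : path.length = k) (hlen' : path'.length = k)
    (hp : ∀ s ∈ path, s.length = lam) (hp' : ∀ s ∈ path', s.length = lam)
    (heq : rootReconstruct H (bitsOf k j) path (H m) =
           rootReconstruct H (bitsOf k j) path' (H m)) :
    ∃ x x' : List Bool, x ≠ x' ∧ H x = H x' := by
  induction k generalizing j path path' with
  | zero =>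
    rw [List.length_eq_zero_iff] at hlen hlen'
    exact absurd (hlen.trans hlen'.symm) hne
  | succ k ih =>
    cases path with
    | nil => simp at hlen
    | cons s ss =>
    cases path' with
    | nil => simp at hlen'
    | cons s' ss' =>
    simp only [bitsOf, rootReconstruct] at heq
    set b := decide (2 ^ k ≤ j) with hb
    set c := rootReconstruct H (bitsOf k (j % 2 ^ k)) ss (H m) with hc
    set c' := rootReconstruct H (bitsOf k (j % 2 ^ k)) ss' (H m) with hc'
    have hcl : c.length = lam := rootReconstruct_len lam H hH m _ _
    have hcl' : c'.length = lam := rootReconstruct_len lam H hH m _ _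
    have hsl : s.length = lam := hp s (by simp)
    have hsl' : s'.length = lam := hp' s' (by simp)
    by_cases harg : (if b then s ++ c else c ++ s) = (if b then s' ++ c' else c' ++ s')
    · -- equal arguments: deduce s = s' and c = c'
      have hsc : s = s' ∧ c = c' := by
        by_cases hb2 : b = true
        · rw [if_pos hb2, if_pos hb2] at harg
          exact List.append_inj harg (hsl.trans hsl'.symm)
        · rw [if_neg hb2, if_neg hb2] at harg
          have := List.append_inj harg (hcl.trans hcl'.symm)
          exact ⟨this.2, this.1⟩
      by_cases hss : ss = ss'
      · exact absurd (by rw [hsc.1, hss]) hne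
      · have hjm : j % 2 ^ k < 2 ^ k := Nat.mod_lt _ (Nat.two_pow_pos k)
        exact ih (j % 2 ^ k) hjm ss ss' hss (by simpa using hlen) (by simpa using hlen')
          (fun t ht => hp t (List.mem_cons_of_mem _ ht))
          (fun t ht => hp' t (List.mem_cons_of_mem _ ht)) (by rw [← hc, ← hc', hsc.2])
    · exact ⟨_, _, harg, heq⟩
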